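/- Let n ≥ 8 be divisible by 4 and d = n/2, and let H be a Hamiltonian cycle on the complete graph on ZMod n such that for every u ∈ ZMod n, H does not contain all three edges of any of the following configurations: (Type A) {u+d, u}, {u, u+1}, {u+1, u+1+d}; (Type B1) {u+1, u}, {u, u+d}, {u+d, u+1+d}; (Type B2) {u, u+1}, {u+1, u+1+d}, {u+1+d, u+d}. Then t_1 + 2·t_d ≤ n, where t_i is the number of edges of H of length i. -/

import Mathlib

open Finset in
private theorem core_bound (n : ℕ) [NeZero n] (hn : 8 ≤ n) (h4 : 4 ∣ n)
    (E : List (Sym2 (ZMod n)))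
    (hA : ∀ u : ZMod n,
      ¬(s(u + ((n / 2 : ℕ) : ZMod n), u) ∈ E ∧ s(u, u + 1) ∈ E ∧
        s(u + 1, u + 1 + ((n / 2 : ℕ) : ZMod n)) ∈ E))
    (hB1 : ∀ u : ZMod n,
      ¬(s(u + 1, u) ∈ E ∧ s(u, u + ((n / 2 : ℕ) : ZMod n)) ∈ E ∧
        s(u + ((n / 2 : ℕ) : ZMod n), u + 1 + ((n / 2 : ℕ) : ZMod n)) ∈ E))
    (hB2 : ∀ u : ZMod n,
      ¬(s(u, u + 1) ∈ E ∧ s(u + 1, u + 1 + ((n / 2 : ℕ) : ZMod n)) ∈ E ∧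
        s(u + 1 + ((n / 2 : ℕ) : ZMod n), u + ((n / 2 : ℕ) : ZMod n)) ∈ E)) :
    (univ.filter (fun u : ZMod n => s(u, u + 1) ∈ E)).card
      + (univ.filter (fun u : ZMod n => s(u, u + ((n / 2 : ℕ) : ZMod n)) ∈ E)).card ≤ n := by
  classical
  set D : ZMod n := ((n / 2 : ℕ) : ZMod n) with hD
  have hDD : D + D = 0 := by
    rw [hD, ← Nat.cast_add, show n/2 + n/2 = n by omega, ZMod.natCast_self]
  have hDadd : ∀ y : ZMod n, y + D + D = y := fun y => by rw [add_assoc, hDD, add_zero]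
  -- B1 helper: if a u and c u then ¬ a (u + D)
  have hnotaD : ∀ u : ZMod n, s(u, u + 1) ∈ E → s(u, u + D) ∈ E →
      s(u + D, u + D + 1) ∉ E := by
    intro u h1 h2 h3
    refine hB1 u ⟨by rw [Sym2.eq_swap]; exact h1, h2, ?_⟩
    rw [show u + 1 + D = u + D + 1 by ring]; exact h3
  -- the key walking lemma
  have key : ∀ u : ZMod n, (s(u, u + 1) ∈ E ∧ s(u, u + D) ∈ E) →
      ∃ (x : ZMod n) (m : ℕ), 1 ≤ m ∧
        (x = u + (m : ZMod n) ∨ x = u + (m : ZMod n) + D) ∧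
        (∀ j : ℕ, 1 ≤ j → j < m →
          s(u + (j : ZMod n), u + (j : ZMod n) + 1) ∈ E ∧
          s(u + (j : ZMod n) + D, u + (j : ZMod n) + D + 1) ∈ E) ∧
        s(x, x + 1) ∉ E ∧ s(x, x + D) ∉ E := by
    rintro u ⟨hau, hcu⟩
    have hex : ∃ k : ℕ, 1 ≤ k ∧ ¬(s(u + (k : ZMod n), u + (k : ZMod n) + 1) ∈ E ∧
        s(u + (k : ZMod n) + D, u + (k : ZMod n) + D + 1) ∈ E) := by
      refine ⟨n / 2, by omega, fun hcontra => ?_⟩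
      rw [show u + ((n/2 : ℕ) : ZMod n) = u + D from rfl] at hcontra
      exact hnotaD u hau hcu hcontra.1
    obtain ⟨hm1, hmnot⟩ := Nat.find_spec hex
    set m := Nat.find hex with hm
    have hdbl : ∀ j : ℕ, 1 ≤ j → j < m →
        s(u + (j : ZMod n), u + (j : ZMod n) + 1) ∈ E ∧
        s(u + (j : ZMod n) + D, u + (j : ZMod n) + D + 1) ∈ E := by
      intro j hj1 hjm
      have h2 := Nat.find_min hex hjm
      tauto
    have hnotc : s(u + (m : ZMod n), u + (m : ZMod n) + D) ∉ E := by
      intro hcm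
      rcases Nat.lt_or_ge m 2 with hm2 | hm2
      · -- m = 1
        have hm1' : m = 1 := by omega
        rw [hm1'] at hcm
        refine hA u ⟨by rw [Sym2.eq_swap]; exact hcu, hau, ?_⟩
        rw [show ((1:ℕ) : ZMod n) = 1 from Nat.cast_one] at hcm
        exact hcm
      · -- m ≥ 2
        obtain ⟨j, hjm⟩ : ∃ j, m = j + 1 := ⟨m - 1, by omega⟩
        obtain ⟨hja, hjaD⟩ := hdbl j (by omega) (by omega)
        have hcast : u + ((j:ℕ) : ZMod n) + 1 = u + ((m:ℕ) : ZMod n) := by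
          rw [hjm]; push_cast; ring
        refine hB2 (u + (j : ZMod n)) ⟨hja, ?_, ?_⟩
        · rw [hcast]; exact hcm
        · rw [show u + (j:ZMod n) + 1 + D = (u + (j:ZMod n) + D) + 1 by ring, Sym2.eq_swap]
          exact hjaD
    have hnotcD : s(u + (m : ZMod n) + D, u + (m : ZMod n) + D + D) ∉ E := by
      rw [hDadd, Sym2.eq_swap]; exact hnotc
    by_cases hx : s(u + (m : ZMod n), u + (m : ZMod n) + 1) ∈ E
    · refine ⟨u + (m : ZMod n) + D, m, hm1, Or.inr rfl, hdbl, ?_, hnotcD⟩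
      intro hcon; exact hmnot ⟨hx, hcon⟩
    · exact ⟨u + (m : ZMod n), m, hm1, Or.inl rfl, hdbl, hx, hnotc⟩
  -- choose the target function
  choose! x m hm1 hxor hdbl hna hnc using key
  set T := univ.filter (fun u : ZMod n => s(u, u + 1) ∈ E ∧ s(u, u + D) ∈ E) with hT
  set Z := univ.filter (fun u : ZMod n => s(u, u + 1) ∉ E ∧ s(u, u + D) ∉ E) with hZ
  have hTmem : ∀ u ∈ T, s(u, u + 1) ∈ E ∧ s(u, u + D) ∈ E := by
    intro u hu; simpa [hT] using hu
  -- asymmetric injectivity auxiliary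
  have haux : ∀ u1 u2 : ZMod n, (s(u1, u1 + 1) ∈ E ∧ s(u1, u1 + D) ∈ E) →
      (s(u2, u2 + 1) ∈ E ∧ s(u2, u2 + D) ∈ E) →
      ∀ δ : ZMod n, (δ = 0 ∨ δ = D) → ∀ j : ℕ, j < m u1 →
      u2 = u1 + (j : ZMod n) + δ → u1 = u2 := by
    intro u1 u2 h1 h2 δ hδ j hj hu2
    rcases Nat.eq_zero_or_pos j with hj0 | hj1
    · subst hj0
      rcases hδ with rfl | rfl
      · rw [hu2]; push_cast; ring
      · exfalso
        apply hnotaD u1 h1.1 h1.2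
        have e : u2 = u1 + D := by rw [hu2]; push_cast; ring
        rw [← e]; exact h2.1
    · exfalso
      obtain ⟨hja, hjaD⟩ := hdbl u1 h1 j hj1 hj
      apply hnotaD u2 h2.1 h2.2
      rcases hδ with rfl | rfl
      · have e : u2 + D = u1 + (j : ZMod n) + D := by rw [hu2]; ring
        rw [e]; exact hjaD
      · have e : u2 + D = u1 + (j : ZMod n) := by rw [hu2, hDadd]
        rw [e]; exact hja
  have hinj : Set.InjOn x T := by
    intro u1 hu1 u2 hu2 hxx
    have h1 := hTmem u1 hu1; have h2 := hTmem u2 hu2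
    have hδδ : ∀ δ : ZMod n, δ = 0 ∨ δ = D → δ + δ = 0 := by
      rintro δ (rfl | rfl)
      · exact add_zero 0
      · exact hDD
    have hcases : ∃ δ : ZMod n, (δ = 0 ∨ δ = D) ∧
        u1 + (m u1 : ZMod n) = u2 + (m u2 : ZMod n) + δ := by
      rcases hxor u1 h1 with e1 | e1 <;> rcases hxor u2 h2 with e2 | e2
      · exact ⟨0, Or.inl rfl, by rw [add_zero, ← e1, ← e2, hxx]⟩
      · exact ⟨D, Or.inr rfl, by rw [← e1, ← e2, hxx]⟩
      · refine ⟨D, Or.inr rfl, ?_⟩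
        have : u1 + (m u1 : ZMod n) + D = u2 + (m u2 : ZMod n) := by rw [← e1, ← e2, hxx]
        linear_combination this - hDD
      · refine ⟨0, Or.inl rfl, ?_⟩
        have : u1 + (m u1 : ZMod n) + D = u2 + (m u2 : ZMod n) + D := by
          rw [← e1, ← e2, hxx]
        linear_combination this
    obtain ⟨δ, hδ, heq⟩ := hcases
    rcases le_total (m u2) (m u1) with hle | hle
    · refine haux u1 u2 h1 h2 δ hδ (m u1 - m u2) (by have := hm1 u2 h2; omega) ?_
      have hc : ((m u1 - m u2 : ℕ) : ZMod n) = (m u1 : ZMod n) - (m u2 : ZMod n) := by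
        push_cast [hle]; ring
      rw [hc]
      linear_combination -heq - hδδ δ hδ
    · refine (haux u2 u1 h2 h1 δ hδ (m u2 - m u1) (by have := hm1 u1 h1; omega) ?_).symm
      have hc : ((m u2 - m u1 : ℕ) : ZMod n) = (m u2 : ZMod n) - (m u1 : ZMod n) := by
        push_cast [hle]; ring
      rw [hc]
      linear_combination heq
  have hmaps : ∀ u ∈ T, x u ∈ Z := by
    intro u hu
    have h := hTmem u hu
    simp only [hZ, Finset.mem_filter, Finset.mem_univ, true_and]
    exact ⟨hna u h, hnc u h⟩
  have hTZ : T.card ≤ Z.card := Finset.card_le_card_of_injOn x hmaps hinj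
  -- counting
  set P := univ.filter (fun u : ZMod n => s(u, u + 1) ∈ E) with hP
  set Q := univ.filter (fun u : ZMod n => s(u, u + D) ∈ E) with hQ
  have e1 : (P ∪ Q).card + (P ∩ Q).card = P.card + Q.card :=
    card_union_add_card_inter P Q
  have e2 : P ∩ Q = T := by
    ext u; simp only [hP, hQ, hT, mem_inter, mem_filter, mem_univ, true_and]
  have e3 : Z = (P ∪ Q)ᶜ := by
    ext u
    simp only [hZ, hP, hQ, mem_filter, mem_univ, true_and, mem_compl, mem_union]
    tauto
  have e4 : (P ∪ Q).card + (P ∪ Q)ᶜ.card = n := by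
    rw [Finset.card_add_card_compl, ZMod.card]
  have e2' : (P ∩ Q).card = T.card := by rw [e2]
  have e3' : Z.card = (P ∪ Q)ᶜ.card := by rw [e3]
  show P.card + Q.card ≤ n
  omega


/-- The length of an edge of the complete graph on `ZMod n`:
`ℓ(i,j) = min(|i−j|, n−|i−j|)`, expressed as `min (i-j).val (j-i).val`. -/
def zLenSym {n : ℕ} : Sym2 (ZMod n) → ℕ :=
  Sym2.lift ⟨fun i j => min (i - j).val (j - i).val, fun i j => min_comm _ _⟩

open Finset in
/-- If a Hamiltonian cycle on `ZMod n` (`n ≥ 8`, `4 ∣ n`, `d = n/2`) contains none of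
the configurations Type A, B1, B2 at any vertex `u`, then `t_1 + 2·t_d ≤ n`. -/
theorem no_bad_structures_implies_bound (n : ℕ) (hn : 8 ≤ n) (h4 : 4 ∣ n)
    (v : ZMod n) (w : (⊤ : SimpleGraph (ZMod n)).Walk v v)
    (hw : w.IsHamiltonianCycle)
    (hA : ∀ u : ZMod n,
      ¬(s(u + ((n / 2 : ℕ) : ZMod n), u) ∈ w.edges ∧ s(u, u + 1) ∈ w.edges ∧
        s(u + 1, u + 1 + ((n / 2 : ℕ) : ZMod n)) ∈ w.edges))
    (hB1 : ∀ u : ZMod n,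
      ¬(s(u + 1, u) ∈ w.edges ∧ s(u, u + ((n / 2 : ℕ) : ZMod n)) ∈ w.edges ∧
        s(u + ((n / 2 : ℕ) : ZMod n), u + 1 + ((n / 2 : ℕ) : ZMod n)) ∈ w.edges))
    (hB2 : ∀ u : ZMod n,
      ¬(s(u, u + 1) ∈ w.edges ∧ s(u + 1, u + 1 + ((n / 2 : ℕ) : ZMod n)) ∈ w.edges ∧
        s(u + 1 + ((n / 2 : ℕ) : ZMod n), u + ((n / 2 : ℕ) : ZMod n)) ∈ w.edges)) :
    (w.edges.toFinset.filter (fun e => zLenSym e = 1)).card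
      + 2 * (w.edges.toFinset.filter (fun e => zLenSym e = n / 2)).card ≤ n := by
  classical
  haveI : NeZero n := ⟨by omega⟩
  haveI : Fact (1 < n) := ⟨by omega⟩
  have hDD : ((n / 2 : ℕ) : ZMod n) + ((n / 2 : ℕ) : ZMod n) = 0 := by
    rw [← Nat.cast_add, show n/2 + n/2 = n by omega, ZMod.natCast_self]
  have hDne : ((n / 2 : ℕ) : ZMod n) ≠ 0 := by
    rw [Ne, ZMod.natCast_eq_zero_iff]
    intro h; have := Nat.le_of_dvd (by omega) h; omega
  have zlen1 : ∀ u : ZMod n, zLenSym s(u, u+1) = 1 := by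
    intro u
    have h1 : ((u+1) - u) = (1 : ZMod n) := by ring
    have h2 : (u - (u+1)) = (-1 : ZMod n) := by ring
    rw [zLenSym, Sym2.lift_mk]
    show min (u - (u+1)).val ((u+1) - u).val = 1
    rw [h1, h2, ZMod.neg_val, ZMod.val_one]
    simp only [if_neg (one_ne_zero (α := ZMod n))]
    omega
  have zlenD : ∀ u : ZMod n, zLenSym s(u, u + ((n/2 : ℕ) : ZMod n)) = n/2 := by
    intro u
    have hDv : (((n/2 : ℕ) : ZMod n)).val = n/2 := ZMod.val_natCast_of_lt (by omega)
    have h1 : ((u + ((n/2 : ℕ) : ZMod n)) - u) = ((n/2 : ℕ) : ZMod n) := by ring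
    have h2 : (u - (u + ((n/2 : ℕ) : ZMod n))) = -((n/2 : ℕ) : ZMod n) := by ring
    rw [zLenSym, Sym2.lift_mk]
    show min (u - (u + _)).val ((u + _) - u).val = n/2
    rw [h1, h2, ZMod.neg_val, hDv, if_neg hDne]
    omega
  have val_eq_cast : ∀ {x : ZMod n} {k : ℕ}, x.val = k → x = (k : ZMod n) := by
    intro x k h
    rw [← h, ZMod.natCast_val, ZMod.cast_id]
  have zlen1_shape : ∀ {e : Sym2 (ZMod n)}, zLenSym e = 1 → ∃ u : ZMod n, e = s(u, u+1) := by
    intro e h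
    induction e using Sym2.ind with
    | _ i j =>
      rw [zLenSym, Sym2.lift_mk] at h
      have h' : min (i - j).val (j - i).val = 1 := h
      have : (i - j).val = 1 ∨ (j - i).val = 1 := by
        rcases le_total (i - j).val (j - i).val with hle | hle
        · rw [min_eq_left hle] at h'; omega
        · rw [min_eq_right hle] at h'; omega
      rcases this with h1 | h1
      · refine ⟨j, ?_⟩
        have hij : i = j + 1 := by
          have := val_eq_cast h1; push_cast at this; linear_combination this
        rw [hij, Sym2.eq_swap]
      · refine ⟨i, ?_⟩
        have hij : j = i + 1 := by
          have := val_eq_cast h1; push_cast at this; linear_combination this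
        rw [hij]
  have zlenD_shape : ∀ {e : Sym2 (ZMod n)}, zLenSym e = n/2 →
      ∃ u : ZMod n, e = s(u, u + ((n/2 : ℕ) : ZMod n)) := by
    intro e h
    induction e using Sym2.ind with
    | _ i j =>
      rw [zLenSym, Sym2.lift_mk] at h
      have h' : min (i - j).val (j - i).val = n/2 := h
      have : (i - j).val = n/2 ∨ (j - i).val = n/2 := by
        rcases le_total (i - j).val (j - i).val with hle | hle
        · rw [min_eq_left hle] at h'; omega
        · rw [min_eq_right hle] at h'; omega
      rcases this with h1 | h1
      · refine ⟨j, ?_⟩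
        have hij : i = j + ((n/2 : ℕ) : ZMod n) := by linear_combination (val_eq_cast h1)
        rw [hij, Sym2.eq_swap]
      · refine ⟨i, ?_⟩
        have hij : j = i + ((n/2 : ℕ) : ZMod n) := by linear_combination (val_eq_cast h1)
        rw [hij]
  -- length-1 edge count
  have h1 : (w.edges.toFinset.filter (fun e => zLenSym e = 1)).card
      = (univ.filter (fun u : ZMod n => s(u, u + 1) ∈ w.edges)).card := by
    refine (Finset.card_nbij (fun u => s(u, u+1)) ?_ ?_ ?_).symm
    · intro u hu
      simp only [Finset.mem_coe, Finset.coe_filter, Set.mem_setOf_eq, mem_filter, mem_univ, true_and] at hu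
      simp only [Finset.mem_coe, Finset.coe_filter, Set.mem_setOf_eq, mem_filter, List.mem_toFinset]
      exact ⟨hu, zlen1 u⟩
    · intro u _ u' _ h
      rcases Sym2.eq_iff.mp h with ⟨h1, -⟩ | ⟨h1, h2⟩
      · exact h1
      · exfalso
        have h2' : (2 : ZMod n) = 0 := by linear_combination h2 - h1
        have : (n : ℕ) ∣ 2 := by
          rw [← ZMod.natCast_eq_zero_iff]; push_cast; exact h2'
        have := Nat.le_of_dvd (by omega) this; omega
    · intro e he
      simp only [Finset.coe_filter, Set.mem_setOf_eq, List.mem_toFinset] at he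
      obtain ⟨u, rfl⟩ := zlen1_shape he.2
      exact ⟨u, by simp only [Finset.coe_filter, Set.mem_setOf_eq, mem_univ, true_and]; exact he.1, rfl⟩
  -- length-d edge count
  have h2 : (univ.filter (fun u : ZMod n => s(u, u + ((n/2 : ℕ) : ZMod n)) ∈ w.edges))
      = (w.edges.toFinset.filter (fun e => zLenSym e = n/2)).biUnion
        (fun e => univ.filter (fun u : ZMod n => s(u, u + ((n/2 : ℕ) : ZMod n)) = e)) := by
    ext u
    simp only [mem_filter, mem_biUnion, mem_univ, true_and, List.mem_toFinset]
    constructor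
    · intro h; exact ⟨s(u, u + ((n/2 : ℕ) : ZMod n)), ⟨h, zlenD u⟩, rfl⟩
    · rintro ⟨e, ⟨he, -⟩, rfl⟩; exact he
  have hfib : ∀ e ∈ (w.edges.toFinset.filter (fun e => zLenSym e = n/2)),
      (univ.filter (fun u : ZMod n => s(u, u + ((n/2 : ℕ) : ZMod n)) = e)).card = 2 := by
    intro e he
    obtain ⟨i, rfl⟩ := zlenD_shape (mem_filter.mp he).2
    have hset : (univ.filter (fun u : ZMod n => s(u, u + ((n/2 : ℕ) : ZMod n))
        = s(i, i + ((n/2 : ℕ) : ZMod n)))) = {i, i + ((n/2 : ℕ) : ZMod n)} := by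
      ext u
      simp only [mem_filter, mem_univ, true_and, mem_insert, mem_singleton, Sym2.eq_iff]
      constructor
      · rintro (⟨rfl, -⟩ | ⟨h1, -⟩)
        · exact Or.inl rfl
        · exact Or.inr h1
      · rintro (rfl | rfl)
        · exact Or.inl ⟨rfl, rfl⟩
        · refine Or.inr ⟨rfl, ?_⟩
          rw [add_assoc, hDD, add_zero]
    rw [hset, Finset.card_insert_of_notMem, Finset.card_singleton]
    simp only [mem_singleton]
    intro h
    exact hDne (by linear_combination -h)
  have h3 : (univ.filter (fun u : ZMod n => s(u, u + ((n/2 : ℕ) : ZMod n)) ∈ w.edges)).card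
      = 2 * (w.edges.toFinset.filter (fun e => zLenSym e = n/2)).card := by
    rw [h2, Finset.card_biUnion]
    · rw [Finset.sum_congr rfl hfib, Finset.sum_const, smul_eq_mul, mul_comm]
    · intro e1 he1 e2 he2 hne
      simp only [Finset.disjoint_left, mem_filter, mem_univ, true_and]
      intro u hu1 hu2
      exact hne (hu1.symm.trans hu2)
  rw [h1, ← h3]
  exact core_bound n hn h4 w.edges hA hB1 hB2
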